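/- Let N ≥ 1 and let U be a Haar-random element of U(2^N). Set ρ := U e₁ e₁† U†, where e₁ is the first standard basis vector of ℂ^{2^N}. Then for all multi-indices i, j ∈ {0,1,2,3}^N with i ≠ 0 and j ≠ 0: E[Tr[ρσ_i]] = 0 and E[Tr[ρσ_i]·Tr[ρσ_j]] = δ_{ij}/(2^N + 1), where δ_{ij} is the Kronecker delta. -/

import Mathlib

open MeasureTheory Matrix

/-- The space of `m × n` complex matrices carries the (product) measurable structure. -/
noncomputable instance {m n : Type*} : MeasurableSpace (Matrix m n ℂ) :=
  (inferInstance : MeasurableSpace (m → n → ℂ))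

/-- The single-qubit Pauli matrices `σ₀ = I, σ₁ = X, σ₂ = Y, σ₃ = Z`. -/
noncomputable def pauli : Fin 4 → Matrix (Fin 2) (Fin 2) ℂ :=
  ![1, !![0, 1; 1, 0], !![0, -Complex.I; Complex.I, 0], !![1, 0; 0, -1]]

/-- The `N`-qubit Pauli string `σ_i = σ_{i₁} ⊗ ⋯ ⊗ σ_{i_N}`, as a matrix on `ℂ^{2^N}`
(whose index set is realized as `Fin N → Fin 2`). -/
noncomputable def pauliString (N : ℕ) (i : Fin N → Fin 4) :
    Matrix (Fin N → Fin 2) (Fin N → Fin 2) ℂ :=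
  Matrix.of fun v w => ∏ n : Fin N, pauli (i n) (v n) (w n)

/-- The first standard basis vector of `ℂ^{2^N}` (realized as the indicator of the
all-zeros index in `Fin N → Fin 2`). -/
def qubitE1 (N : ℕ) : (Fin N → Fin 2) → ℂ := fun v => if v = fun _ => 0 then 1 else 0

/-- The pure state `ρ = U e₁ e₁† U†`. -/
noncomputable def haarPureState (N : ℕ)
    (U : Matrix.unitaryGroup (Fin N → Fin 2) ℂ) :
    Matrix (Fin N → Fin 2) (Fin N → Fin 2) ℂ :=
  (U : Matrix (Fin N → Fin 2) (Fin N → Fin 2) ℂ) *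
    Matrix.vecMulVec (qubitE1 N) (star (qubitE1 N)) *
    (U : Matrix (Fin N → Fin 2) (Fin N → Fin 2) ℂ)ᴴ

set_option synthInstance.maxHeartbeats 1000000
set_option maxHeartbeats 2000000

namespace HaarPauliAux

instance {m n : Type*} [Countable m] [Countable n] :
    BorelSpace (Matrix m n ℂ) := Pi.borelSpace

variable {N : ℕ}

instance : BorelSpace (Matrix.unitaryGroup (Fin N → Fin 2) ℂ) :=
  Subtype.borelSpace _

instance : CompactSpace (Matrix.unitaryGroup (Fin N → Fin 2) ℂ) := by
  apply isCompact_iff_compactSpace.mp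
  have hsub : (Matrix.unitaryGroup (Fin N → Fin 2) ℂ : Set (Matrix (Fin N → Fin 2) (Fin N → Fin 2) ℂ))
      ⊆ Set.univ.pi (fun _ => Set.univ.pi fun _ => Metric.closedBall (0:ℂ) 1) := by
    intro U hU
    refine Set.mem_univ_pi.mpr fun p => Set.mem_univ_pi.mpr fun q => ?_
    rw [Metric.mem_closedBall, dist_zero_right]
    exact entry_norm_bound_of_unitary hU p q
  have hcpt : IsCompact (Set.univ.pi (fun _ : Fin N → Fin 2 =>
      Set.univ.pi fun _ : Fin N → Fin 2 => Metric.closedBall (0:ℂ) 1)) :=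
    isCompact_univ_pi fun _ => isCompact_univ_pi fun _ => isCompact_closedBall 0 1
  have hclosed : IsClosed (Matrix.unitaryGroup (Fin N → Fin 2) ℂ :
      Set (Matrix (Fin N → Fin 2) (Fin N → Fin 2) ℂ)) := by
    have heq : (Matrix.unitaryGroup (Fin N → Fin 2) ℂ :
        Set (Matrix (Fin N → Fin 2) (Fin N → Fin 2) ℂ)) =
        (fun U : Matrix (Fin N → Fin 2) (Fin N → Fin 2) ℂ => (star U * U, U * star U)) ⁻¹'
          {((1 : Matrix (Fin N → Fin 2) (Fin N → Fin 2) ℂ),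
            (1 : Matrix (Fin N → Fin 2) (Fin N → Fin 2) ℂ))} := by
      ext U
      constructor
      · intro hU
        have h := (Unitary.mem_iff).mp hU
        simp [Set.mem_preimage, Prod.ext_iff, h.1, h.2]
      · intro hU
        simp only [Set.mem_preimage, Set.mem_singleton_iff, Prod.ext_iff] at hU
        exact (Unitary.mem_iff).mpr ⟨hU.1, hU.2⟩
    rw [heq]
    apply IsClosed.preimage _ isClosed_singleton
    exact Continuous.prodMk
      (continuous_id.matrix_conjTranspose.matrix_mul continuous_id)
      (continuous_id.matrix_mul continuous_id.matrix_conjTranspose)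
  exact hcpt.of_isClosed_subset hclosed hsub

instance : MeasurableMul (Matrix.unitaryGroup (Fin N → Fin 2) ℂ) := by
  constructor
  · intro g
    have h : Continuous (fun x : Matrix.unitaryGroup (Fin N → Fin 2) ℂ =>
        (g : Matrix (Fin N → Fin 2) (Fin N → Fin 2) ℂ) * (x : Matrix (Fin N → Fin 2) (Fin N → Fin 2) ℂ)) :=
      continuous_const.matrix_mul continuous_subtype_val
    exact (h.subtype_mk _).measurable
  · intro g
    have h : Continuous (fun x : Matrix.unitaryGroup (Fin N → Fin 2) ℂ =>
        (x : Matrix (Fin N → Fin 2) (Fin N → Fin 2) ℂ) * (g : Matrix (Fin N → Fin 2) (Fin N → Fin 2) ℂ)) :=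
      continuous_subtype_val.matrix_mul continuous_const
    exact (h.subtype_mk _).measurable

/-- The index type. -/
abbrev Kt (N : ℕ) := Fin N → Fin 2

/-- The all-zeros index. -/
def e0 (N : ℕ) : Kt N := fun _ => 0

/-- The matrix entry in column `e0`. -/
def ent (p : Kt N) (U : Matrix.unitaryGroup (Kt N) ℂ) : ℂ :=
  (U : Matrix (Kt N) (Kt N) ℂ) p (e0 N)

lemma cont_ent (p : Kt N) : Continuous (ent (N := N) p) :=
  (continuous_subtype_val).matrix_elem p _

lemma integrable_cont (μ : Measure (Matrix.unitaryGroup (Kt N) ℂ)) [IsProbabilityMeasure μ]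
    (f : Matrix.unitaryGroup (Kt N) ℂ → ℂ) (hf : Continuous f) : Integrable f μ :=
  hf.integrable_of_hasCompactSupport (HasCompactSupport.of_compactSpace f)

end HaarPauliAux

namespace HaarPauliAux
open Complex
variable {N : ℕ}

set_option maxRecDepth 8000

/-! ### Phase unitaries -/

/-- Diagonal phase vector: `I` at `v0`, `1` elsewhere. -/
def phD (v0 : Kt N) : Kt N → ℂ := fun p => if p = v0 then Complex.I else 1

def phaseU (v0 : Kt N) : Matrix.unitaryGroup (Kt N) ℂ :=
  ⟨Matrix.diagonal (phD v0), by
    rw [Matrix.mem_unitaryGroup_iff']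
    rw [Matrix.star_eq_conjTranspose, Matrix.diagonal_conjTranspose,
      Matrix.diagonal_mul_diagonal]
    have h1 : (fun i => star (phD v0) i * phD v0 i) = fun _ => (1:ℂ) := by
      funext p
      simp only [Pi.star_apply, phD]
      by_cases h : p = v0 <;>
        simp [h, Complex.conj_I, Complex.I_mul_I]
    rw [h1, ← Matrix.diagonal_one]⟩

lemma ent_phaseU_mul (v0 p : Kt N) (U : Matrix.unitaryGroup (Kt N) ℂ) :
    ent p (phaseU v0 * U) = phD v0 p * ent p U := by
  show ((phaseU v0 * U : Matrix.unitaryGroup (Kt N) ℂ) : Matrix (Kt N) (Kt N) ℂ) p (e0 N) = _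
  rw [Submonoid.coe_mul]
  show (Matrix.diagonal (phD v0) * (U : Matrix (Kt N) (Kt N) ℂ)) p (e0 N) = _
  rw [Matrix.diagonal_mul]
  rfl

/-! ### Permutation unitaries -/

def permM (π : Equiv.Perm (Kt N)) : Matrix (Kt N) (Kt N) ℂ :=
  Matrix.of fun p q => if p = π q then 1 else 0

def permU (π : Equiv.Perm (Kt N)) : Matrix.unitaryGroup (Kt N) ℂ :=
  ⟨permM π, by
    rw [Matrix.mem_unitaryGroup_iff']
    ext q q'
    simp only [Matrix.mul_apply, Matrix.star_eq_conjTranspose, Matrix.conjTranspose_apply,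
      permM, Matrix.of_apply]
    have hterm : ∀ r : Kt N, star (if r = π q then (1:ℂ) else 0) * (if r = π q' then 1 else 0)
        = if r = π q then (if r = π q' then (1:ℂ) else 0) else 0 := by
      intro r
      by_cases h1 : r = π q <;> simp [h1]
    rw [Finset.sum_congr rfl (fun r _ => hterm r)]
    rw [Finset.sum_ite_eq' Finset.univ (π q) (fun r => if r = π q' then (1:ℂ) else 0)]
    simp [Matrix.one_apply, π.injective.eq_iff]⟩

lemma ent_permU_mul (π : Equiv.Perm (Kt N)) (p : Kt N) (U : Matrix.unitaryGroup (Kt N) ℂ) :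
    ent (π p) (permU π * U) = ent p U := by
  show ((permU π * U : Matrix.unitaryGroup (Kt N) ℂ) : Matrix (Kt N) (Kt N) ℂ) (π p) (e0 N) = _
  rw [Submonoid.coe_mul]
  show (permM π * (U : Matrix (Kt N) (Kt N) ℂ)) (π p) (e0 N) = _
  rw [Matrix.mul_apply]
  rw [Finset.sum_eq_single p]
  · simp [permM, ent]
  · intro r _ hr
    have : π p ≠ π r := fun h => hr (π.injective h).symm
    simp [permM, this]
  · simp

end HaarPauliAux

namespace HaarPauliAux
variable {N : ℕ}
set_option maxRecDepth 8000
set_option linter.unreachableTactic false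
set_option linter.unusedTactic false

/-! ### Rotation (Hadamard-type) unitaries -/

noncomputable def rc : ℂ := ((Real.sqrt 2)⁻¹ : ℝ)

lemma rc_mul_rc : rc * rc = 2⁻¹ := by
  have h : (Real.sqrt 2)⁻¹ * (Real.sqrt 2)⁻¹ = (2:ℝ)⁻¹ := by
    rw [← mul_inv, Real.mul_self_sqrt (by norm_num : (0:ℝ) ≤ 2)]
  rw [rc, ← Complex.ofReal_mul, h]
  push_cast
  ring

lemma conj_rc : (starRingEnd ℂ) rc = rc := Complex.conj_ofReal _

noncomputable def rotM (v x : Kt N) : Matrix (Kt N) (Kt N) ℂ :=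
  Matrix.of fun p q =>
    if p = v then (if q = v then rc else if q = x then rc else 0)
    else if p = x then (if q = v then rc else if q = x then -rc else 0)
    else if p = q then 1 else 0

lemma rotM_sum_row_v (v x : Kt N) (hvx : v ≠ x) (f : Kt N → ℂ) :
    ∑ r, rotM v x v r * f r = rc * f v + rc * f x := by
  have h : ∀ r : Kt N, rotM v x v r * f r
      = (if r = v then rc * f r else 0) + (if r = x then rc * f r else 0) := by
    intro r
    by_cases h1 : r = v
    · simp [rotM, h1, hvx, Ne.symm hvx]
    · by_cases h2 : r = x
      · simp [rotM, h1, h2, hvx, Ne.symm hvx]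
      · simp [rotM, h1, h2, Ne.symm hvx]
  rw [Finset.sum_congr rfl fun r _ => h r, Finset.sum_add_distrib,
    Finset.sum_ite_eq' Finset.univ v (fun r => rc * f r),
    Finset.sum_ite_eq' Finset.univ x (fun r => rc * f r)]
  simp

lemma rotM_sum_row_x (v x : Kt N) (hvx : v ≠ x) (f : Kt N → ℂ) :
    ∑ r, rotM v x x r * f r = rc * f v - rc * f x := by
  have h : ∀ r : Kt N, rotM v x x r * f r
      = (if r = v then rc * f r else 0) + (if r = x then -(rc * f r) else 0) := by
    intro r
    by_cases h1 : r = v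
    · simp [rotM, h1, hvx, Ne.symm hvx]
    · by_cases h2 : r = x
      · simp [rotM, h1, h2, hvx, Ne.symm hvx]; try ring
      · simp [rotM, h1, h2, Ne.symm hvx]
  rw [Finset.sum_congr rfl fun r _ => h r, Finset.sum_add_distrib,
    Finset.sum_ite_eq' Finset.univ v (fun r => rc * f r),
    Finset.sum_ite_eq' Finset.univ x (fun r => -(rc * f r))]
  simp
  try ring

lemma rotM_sum_row_other (v x p : Kt N) (h1 : p ≠ v) (h2 : p ≠ x) (f : Kt N → ℂ) :
    ∑ r, rotM v x p r * f r = f p := by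
  rw [Finset.sum_eq_single p]
  · simp [rotM, h1, h2]
  · intro r _ hr
    simp [rotM, h1, h2, Ne.symm hr]
  · simp

lemma rotM_conjTranspose (v x : Kt N) : (rotM v x)ᴴ = rotM v x := by
  ext p q
  rw [Matrix.conjTranspose_apply]
  by_cases h1 : p = v <;> by_cases h2 : q = v <;> by_cases h3 : p = x <;> by_cases h4 : q = x <;>
    simp_all [rotM, conj_rc, eq_comm] <;>
    simp [map_neg, conj_rc]

lemma rotM_app_vv (v x : Kt N) : rotM v x v v = rc := by simp [rotM]
lemma rotM_app_vx (v x : Kt N) (hvx : v ≠ x) : rotM v x v x = rc := by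
  simp [rotM, Ne.symm hvx]
lemma rotM_app_xv (v x : Kt N) (hvx : v ≠ x) : rotM v x x v = rc := by
  simp [rotM, Ne.symm hvx]
lemma rotM_app_xx (v x : Kt N) (hvx : v ≠ x) : rotM v x x x = -rc := by
  simp [rotM, Ne.symm hvx]
lemma rotM_app_v_other (v x q : Kt N) (h1 : q ≠ v) (h2 : q ≠ x) : rotM v x v q = 0 := by
  simp [rotM, h1, h2]
lemma rotM_app_x_other (v x q : Kt N) (hvx : v ≠ x) (h1 : q ≠ v) (h2 : q ≠ x) :
    rotM v x x q = 0 := by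
  simp [rotM, h1, h2, Ne.symm hvx]

lemma rotM_mul_rotM (v x : Kt N) (hvx : v ≠ x) : rotM v x * rotM v x = 1 := by
  ext p r
  rw [Matrix.mul_apply]
  by_cases h1 : p = v
  · rw [h1, rotM_sum_row_v v x hvx (fun q => rotM v x q r)]
    by_cases h2 : r = v
    · rw [h2, rotM_app_vv, rotM_app_xv v x hvx, Matrix.one_apply_eq]
      linear_combination (2:ℂ) * rc_mul_rc
    · by_cases h3 : r = x
      · rw [h3, rotM_app_vx v x hvx, rotM_app_xx v x hvx, Matrix.one_apply_ne hvx]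
        ring
      · rw [rotM_app_v_other v x r (Ne.intro h2) (Ne.intro h3),
          rotM_app_x_other v x r hvx (Ne.intro h2) (Ne.intro h3),
          Matrix.one_apply_ne (fun hh : v = r => h2 hh.symm)]
        ring
  · by_cases h3 : p = x
    · rw [h3, rotM_sum_row_x v x hvx (fun q => rotM v x q r)]
      by_cases h2 : r = v
      · rw [h2, rotM_app_vv, rotM_app_xv v x hvx, Matrix.one_apply_ne (Ne.symm hvx)]
        ring
      · by_cases h4 : r = x
        · rw [h4, rotM_app_vx v x hvx, rotM_app_xx v x hvx, Matrix.one_apply_eq]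
          linear_combination (2:ℂ) * rc_mul_rc
        · rw [rotM_app_v_other v x r (Ne.intro h2) (Ne.intro h4),
            rotM_app_x_other v x r hvx (Ne.intro h2) (Ne.intro h4),
            Matrix.one_apply_ne (fun hh : x = r => h4 hh.symm)]
          ring
    · rw [rotM_sum_row_other v x p (Ne.intro h1) (Ne.intro h3) (fun q => rotM v x q r)]
      by_cases h2 : p = r
      · rw [h2] at h1 h3 ⊢
        rw [Matrix.one_apply_eq]
        simp [rotM, h1, h3]
      · rw [Matrix.one_apply_ne (Ne.intro h2)]
        simp [rotM, h1, h3, h2]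

noncomputable def rotU (v x : Kt N) (hvx : v ≠ x) : Matrix.unitaryGroup (Kt N) ℂ :=
  ⟨rotM v x, by
    rw [Matrix.mem_unitaryGroup_iff', Matrix.star_eq_conjTranspose, rotM_conjTranspose]
    exact rotM_mul_rotM v x hvx⟩

lemma ent_rotU_mul (v x : Kt N) (hvx : v ≠ x) (U : Matrix.unitaryGroup (Kt N) ℂ) :
    ent v (rotU v x hvx * U) = rc * ent v U + rc * ent x U := by
  show ((rotU v x hvx * U : Matrix.unitaryGroup (Kt N) ℂ) : Matrix (Kt N) (Kt N) ℂ) v (e0 N) = _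
  rw [Submonoid.coe_mul]
  show (rotM v x * (U : Matrix (Kt N) (Kt N) ℂ)) v (e0 N) = _
  rw [Matrix.mul_apply, rotM_sum_row_v v x hvx (fun q => (U : Matrix (Kt N) (Kt N) ℂ) q (e0 N))]
  rfl

end HaarPauliAux

namespace HaarPauliAux
open ComplexConjugate
variable {N : ℕ}
set_option maxRecDepth 8000
set_option linter.unusedSectionVars false
set_option linter.unnecessarySimpa false

variable (μ : Measure (Matrix.unitaryGroup (Kt N) ℂ)) [μ.IsHaarMeasure] [IsProbabilityMeasure μ]

noncomputable def Iq (v w : Kt N) : ℂ := ∫ U, ent v U * conj (ent w U) ∂μ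

noncomputable def Tq (v w x y : Kt N) : ℂ :=
  ∫ U, ent v U * conj (ent w U) * (ent x U * conj (ent y U)) ∂μ

lemma cont_conj_ent (w : Kt N) :
    Continuous (fun U : Matrix.unitaryGroup (Kt N) ℂ => (conj (ent w U) : ℂ)) :=
  Complex.continuous_conj.comp (cont_ent w)

lemma cont2 (v w : Kt N) :
    Continuous (fun U : Matrix.unitaryGroup (Kt N) ℂ => ent v U * conj (ent w U)) :=
  (cont_ent v).mul (cont_conj_ent w)

lemma cont4 (v w x y : Kt N) :
    Continuous (fun U : Matrix.unitaryGroup (Kt N) ℂ =>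
      ent v U * conj (ent w U) * (ent x U * conj (ent y U))) :=
  ((cont2 v w).mul (cont2 x y))

lemma integrable2 (v w : Kt N) :
    Integrable (fun U : Matrix.unitaryGroup (Kt N) ℂ => ent v U * conj (ent w U)) μ :=
  integrable_cont μ _ (cont2 v w)

lemma integrable4 (v w x y : Kt N) :
    Integrable (fun U : Matrix.unitaryGroup (Kt N) ℂ =>
      ent v U * conj (ent w U) * (ent x U * conj (ent y U))) μ :=
  integrable_cont μ _ (cont4 v w x y)

lemma haar_shift (V : Matrix.unitaryGroup (Kt N) ℂ)
    (f : Matrix.unitaryGroup (Kt N) ℂ → ℂ) :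
    ∫ U, f (V * U) ∂μ = ∫ U, f U ∂μ :=
  integral_mul_left_eq_self f V

lemma eq_self_mul_zero {z c : ℂ} (h : z = c * z) (hc : c ≠ 1) : z = 0 := by
  have h2 : (c - 1) * z = 0 := by linear_combination -h
  rcases mul_eq_zero.mp h2 with h3 | h3
  · exact absurd (by linear_combination h3) hc
  · exact h3

/-- Column of a unitary has norm one. -/
lemma sum_ent_sq (U : Matrix.unitaryGroup (Kt N) ℂ) :
    ∑ p, ent p U * conj (ent p U) = 1 := by
  have hU : star (U : Matrix (Kt N) (Kt N) ℂ) * (U : Matrix (Kt N) (Kt N) ℂ) = 1 :=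
    Matrix.mem_unitaryGroup_iff'.mp U.prop
  have h2 : (star (U : Matrix (Kt N) (Kt N) ℂ) * (U : Matrix (Kt N) (Kt N) ℂ)) (e0 N) (e0 N)
      = (1 : Matrix (Kt N) (Kt N) ℂ) (e0 N) (e0 N) := by rw [hU]
  rw [Matrix.mul_apply, Matrix.one_apply_eq] at h2
  rw [← h2]
  congr 1
  funext p
  rw [Matrix.star_apply]
  show ent p U * conj (ent p U) = star (ent p U) * ent p U
  rw [Complex.star_def]
  ring

lemma Iq_phase (v0 v w : Kt N) :
    Iq μ v w = (phD v0 v * conj (phD v0 w)) * Iq μ v w := by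
  have h1 : ∀ U, ent v (phaseU v0 * U) * conj (ent w (phaseU v0 * U))
      = (phD v0 v * conj (phD v0 w)) * (ent v U * conj (ent w U)) := by
    intro U
    rw [ent_phaseU_mul, ent_phaseU_mul, _root_.map_mul]
    ring
  calc Iq μ v w = ∫ U, ent v (phaseU v0 * U) * conj (ent w (phaseU v0 * U)) ∂μ :=
        (haar_shift μ (phaseU v0) _).symm
    _ = ∫ U, (phD v0 v * conj (phD v0 w)) * (ent v U * conj (ent w U)) ∂μ := by simp_rw [h1]
    _ = _ := by rw [MeasureTheory.integral_const_mul]; rfl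

lemma Iq_perm (π : Equiv.Perm (Kt N)) (v w : Kt N) :
    Iq μ (π v) (π w) = Iq μ v w := by
  have h1 : ∀ U, ent (π v) (permU π * U) * conj (ent (π w) (permU π * U))
      = ent v U * conj (ent w U) := by
    intro U
    rw [ent_permU_mul, ent_permU_mul]
  calc Iq μ (π v) (π w)
      = ∫ U, ent (π v) (permU π * U) * conj (ent (π w) (permU π * U)) ∂μ :=
        (haar_shift μ (permU π) _).symm
    _ = ∫ U, ent v U * conj (ent w U) ∂μ := by simp_rw [h1]

lemma I_ne_one : (Complex.I : ℂ) ≠ 1 := by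
  intro h
  simpa [Complex.ext_iff] using h

lemma Iq_off (v w : Kt N) (hvw : v ≠ w) : Iq μ v w = 0 := by
  apply eq_self_mul_zero (Iq_phase μ v v w)
  simp [phD, hvw, Ne.symm hvw]
  exact I_ne_one

lemma Iq_diag (v : Kt N) : Iq μ v v = 1 / (Fintype.card (Kt N) : ℂ) := by
  have hsum : ∑ p : Kt N, Iq μ p p = 1 := by
    simp only [Iq]
    rw [← MeasureTheory.integral_finset_sum _ (fun p _ => integrable2 μ p p)]
    simp_rw [sum_ent_sq]
    simp
  have hall : ∀ p : Kt N, Iq μ p p = Iq μ v v := by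
    intro p
    have h := Iq_perm μ (Equiv.swap p v) v v
    rw [Equiv.swap_apply_right] at h
    exact h
  rw [Finset.sum_congr rfl (fun p _ => hall p), Finset.sum_const, Finset.card_univ] at hsum
  have hc : (Fintype.card (Kt N) : ℂ) ≠ 0 := Nat.cast_ne_zero.mpr Fintype.card_ne_zero
  have h2 : (Fintype.card (Kt N) : ℂ) * Iq μ v v = 1 := by
    rw [← nsmul_eq_mul]; exact hsum
  rw [eq_div_iff hc]
  linear_combination h2

end HaarPauliAux

namespace HaarPauliAux
open ComplexConjugate
variable {N : ℕ}
set_option maxRecDepth 8000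
set_option linter.unusedSectionVars false

variable (μ : Measure (Matrix.unitaryGroup (Kt N) ℂ)) [μ.IsHaarMeasure] [IsProbabilityMeasure μ]

lemma Tq_phase (v0 v w x y : Kt N) :
    Tq μ v w x y
      = (phD v0 v * phD v0 x * conj (phD v0 w) * conj (phD v0 y)) * Tq μ v w x y := by
  have h1 : ∀ U, ent v (phaseU v0 * U) * conj (ent w (phaseU v0 * U)) *
        (ent x (phaseU v0 * U) * conj (ent y (phaseU v0 * U)))
      = (phD v0 v * phD v0 x * conj (phD v0 w) * conj (phD v0 y)) *
        (ent v U * conj (ent w U) * (ent x U * conj (ent y U))) := by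
    intro U
    rw [ent_phaseU_mul, ent_phaseU_mul, ent_phaseU_mul, ent_phaseU_mul,
      _root_.map_mul, _root_.map_mul]
    ring
  calc Tq μ v w x y
      = ∫ U, ent v (phaseU v0 * U) * conj (ent w (phaseU v0 * U)) *
          (ent x (phaseU v0 * U) * conj (ent y (phaseU v0 * U))) ∂μ :=
        (haar_shift μ (phaseU v0) _).symm
    _ = ∫ U, (phD v0 v * phD v0 x * conj (phD v0 w) * conj (phD v0 y)) *
          (ent v U * conj (ent w U) * (ent x U * conj (ent y U))) ∂μ := by simp_rw [h1]
    _ = _ := by rw [MeasureTheory.integral_const_mul]; rfl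

lemma Tq_perm (π : Equiv.Perm (Kt N)) (v w x y : Kt N) :
    Tq μ (π v) (π w) (π x) (π y) = Tq μ v w x y := by
  have h1 : ∀ U, ent (π v) (permU π * U) * conj (ent (π w) (permU π * U)) *
        (ent (π x) (permU π * U) * conj (ent (π y) (permU π * U)))
      = ent v U * conj (ent w U) * (ent x U * conj (ent y U)) := by
    intro U
    rw [ent_permU_mul, ent_permU_mul, ent_permU_mul, ent_permU_mul]
  calc Tq μ (π v) (π w) (π x) (π y)
      = ∫ U, ent (π v) (permU π * U) * conj (ent (π w) (permU π * U)) *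
          (ent (π x) (permU π * U) * conj (ent (π y) (permU π * U))) ∂μ :=
        (haar_shift μ (permU π) _).symm
    _ = Tq μ v w x y := by simp_rw [h1]; rfl

lemma Tq_comm_conj (v w x y : Kt N) : Tq μ v w x y = Tq μ v y x w := by
  simp only [Tq]; congr 1; funext U; ring

lemma Tq_halves (v w x y : Kt N) : Tq μ v w x y = Tq μ x y v w := by
  simp only [Tq]; congr 1; funext U; ring

lemma Tq_zero_of (v0 v w x y : Kt N)
    (h : phD v0 v * phD v0 x * conj (phD v0 w) * conj (phD v0 y) ≠ 1) :
    Tq μ v w x y = 0 :=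
  eq_self_mul_zero (Tq_phase μ v0 v w x y) h

lemma Tq_sum (v : Kt N) : ∑ x : Kt N, Tq μ v v x x = Iq μ v v := by
  simp only [Tq, Iq]
  rw [← MeasureTheory.integral_finset_sum _ (fun x _ => integrable4 μ v v x x)]
  congr 1
  funext U
  rw [← Finset.mul_sum, sum_ent_sq, mul_one]

lemma Tq_swap_fix (v x x' : Kt N) (hvx : v ≠ x) (hvx' : v ≠ x') :
    Tq μ v v x x = Tq μ v v x' x' := by
  by_cases h : x = x'
  · rw [h]
  · have hπ := Tq_perm μ (Equiv.swap x x') v v x x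
    rw [Equiv.swap_apply_left, Equiv.swap_apply_of_ne_of_ne hvx hvx'] at hπ
    exact hπ.symm

lemma Tq_all_eq (v x : Kt N) (hvx : v ≠ x) : Tq μ v v v v = Tq μ x x x x := by
  have hπ := Tq_perm μ (Equiv.swap v x) v v v v
  rw [Equiv.swap_apply_left] at hπ
  exact hπ.symm

lemma neg_I_ne_one : -(Complex.I) ≠ (1:ℂ) := by
  intro h; simpa [Complex.ext_iff] using h

lemma neg_one_ne_one : (-1 : ℂ) ≠ 1 := by norm_num

end HaarPauliAux

namespace HaarPauliAux
open ComplexConjugate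
variable {N : ℕ}
set_option maxRecDepth 8000
set_option linter.unusedSectionVars false

variable (μ : Measure (Matrix.unitaryGroup (Kt N) ℂ)) [μ.IsHaarMeasure] [IsProbabilityMeasure μ]

lemma Tq_rot_expand (v x : Kt N) (hvx : v ≠ x) :
    Tq μ v v v v = (4:ℂ)⁻¹ * ∑ t : (Fin 2 × Fin 2 × Fin 2 × Fin 2),
      Tq μ (![v,x] t.1) (![v,x] t.2.1) (![v,x] t.2.2.1) (![v,x] t.2.2.2) := by
  have hpt : ∀ U, ent v (rotU v x hvx * U) * conj (ent v (rotU v x hvx * U)) *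
        (ent v (rotU v x hvx * U) * conj (ent v (rotU v x hvx * U)))
      = (4:ℂ)⁻¹ * ∑ t : (Fin 2 × Fin 2 × Fin 2 × Fin 2),
          (ent (![v,x] t.1) U * conj (ent (![v,x] t.2.1) U) *
            (ent (![v,x] t.2.2.1) U * conj (ent (![v,x] t.2.2.2) U))) := by
    intro U
    rw [ent_rotU_mul]
    have hexp : (rc * ent v U + rc * ent x U) * conj (rc * ent v U + rc * ent x U)
        = 2⁻¹ * ((ent v U + ent x U) * (conj (ent v U) + conj (ent x U))) := by
      rw [map_add, _root_.map_mul, _root_.map_mul, conj_rc]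
      linear_combination ((ent v U + ent x U) * (conj (ent v U) + conj (ent x U))) * rc_mul_rc
    rw [hexp]
    have hsum : ∑ t : (Fin 2 × Fin 2 × Fin 2 × Fin 2),
        (ent (![v,x] t.1) U * conj (ent (![v,x] t.2.1) U) *
          (ent (![v,x] t.2.2.1) U * conj (ent (![v,x] t.2.2.2) U)))
        = ((ent v U + ent x U) * (conj (ent v U) + conj (ent x U))) *
          ((ent v U + ent x U) * (conj (ent v U) + conj (ent x U))) := by
      rw [Fintype.sum_prod_type]
      simp only [Fintype.sum_prod_type, Fin.sum_univ_two, Matrix.cons_val_zero,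
        Matrix.cons_val_one, Matrix.head_cons]
      ring
    rw [hsum]
    ring
  calc Tq μ v v v v
      = ∫ U, ent v (rotU v x hvx * U) * conj (ent v (rotU v x hvx * U)) *
          (ent v (rotU v x hvx * U) * conj (ent v (rotU v x hvx * U))) ∂μ :=
        (haar_shift μ (rotU v x hvx) _).symm
    _ = ∫ U, (4:ℂ)⁻¹ * ∑ t : (Fin 2 × Fin 2 × Fin 2 × Fin 2),
          (ent (![v,x] t.1) U * conj (ent (![v,x] t.2.1) U) *
            (ent (![v,x] t.2.2.1) U * conj (ent (![v,x] t.2.2.2) U))) ∂μ := by simp_rw [hpt]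
    _ = (4:ℂ)⁻¹ * ∫ U, ∑ t : (Fin 2 × Fin 2 × Fin 2 × Fin 2),
          (ent (![v,x] t.1) U * conj (ent (![v,x] t.2.1) U) *
            (ent (![v,x] t.2.2.1) U * conj (ent (![v,x] t.2.2.2) U))) ∂μ :=
        MeasureTheory.integral_const_mul _ _
    _ = _ := by
        rw [MeasureTheory.integral_finset_sum _ (fun t _ => integrable4 μ _ _ _ _)]
        rfl

lemma Tvvvv_eq (v x : Kt N) (hvx : v ≠ x) : Tq μ v v v v = 2 * Tq μ v v x x := by
  have hvx' : x ≠ v := Ne.symm hvx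
  have hexp := Tq_rot_expand μ v x hvx
  simp only [Fintype.sum_prod_type, Fin.sum_univ_two, Matrix.cons_val_zero,
    Matrix.cons_val_one, Matrix.head_cons] at hexp
  -- zero terms
  have z1 : Tq μ v v v x = 0 := Tq_zero_of μ v _ _ _ _ (by
    simp [phD, hvx', Complex.conj_I]; norm_num [Complex.ext_iff])
  have z2 : Tq μ v v x v = 0 := Tq_zero_of μ v _ _ _ _ (by
    simp [phD, hvx', Complex.conj_I]; norm_num [Complex.ext_iff])
  have z3 : Tq μ v x v v = 0 := Tq_zero_of μ v _ _ _ _ (by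
    simp [phD, hvx', Complex.conj_I]; norm_num [Complex.ext_iff])
  have z4 : Tq μ x v v v = 0 := Tq_zero_of μ v _ _ _ _ (by
    simp [phD, hvx', Complex.conj_I]; norm_num [Complex.ext_iff])
  have z5 : Tq μ v x v x = 0 := Tq_zero_of μ v _ _ _ _ (by
    simp [phD, hvx', Complex.conj_I]; norm_num [Complex.ext_iff])
  have z6 : Tq μ x v x v = 0 := Tq_zero_of μ v _ _ _ _ (by
    simp [phD, hvx', Complex.conj_I]; norm_num [Complex.ext_iff])
  have z7 : Tq μ v x x x = 0 := Tq_zero_of μ v _ _ _ _ (by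
    simp [phD, hvx', Complex.conj_I]; norm_num [Complex.ext_iff])
  have z8 : Tq μ x v x x = 0 := Tq_zero_of μ v _ _ _ _ (by
    simp [phD, hvx', Complex.conj_I]; norm_num [Complex.ext_iff])
  have z9 : Tq μ x x v x = 0 := Tq_zero_of μ v _ _ _ _ (by
    simp [phD, hvx', Complex.conj_I]; norm_num [Complex.ext_iff])
  have z10 : Tq μ x x x v = 0 := Tq_zero_of μ v _ _ _ _ (by
    simp [phD, hvx', Complex.conj_I]; norm_num [Complex.ext_iff])
  -- equal terms
  have e1 : Tq μ v x x v = Tq μ v v x x := Tq_comm_conj μ v x x v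
  have e2 : Tq μ x v v x = Tq μ x x v v := Tq_comm_conj μ x v v x
  have e3 : Tq μ x x v v = Tq μ v v x x := Tq_halves μ x x v v
  have e4 : Tq μ x x x x = Tq μ v v v v := (Tq_all_eq μ v x hvx).symm
  rw [z1, z2, z3, z4, z5, z6, z7, z8, z9, z10, e1, e2, e3, e4] at hexp
  linear_combination 2 * hexp

lemma Tvvxx_val (v x : Kt N) (hvx : v ≠ x) :
    Tq μ v v x x
      = 1 / ((Fintype.card (Kt N) : ℂ) * ((Fintype.card (Kt N) : ℂ) + 1)) := by
  set d : ℂ := (Fintype.card (Kt N) : ℂ) with hd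
  have hsum := Tq_sum μ v
  rw [Iq_diag μ v] at hsum
  have hsplit : ∑ x' : Kt N, Tq μ v v x' x'
      = Tq μ v v v v + ∑ x' ∈ Finset.univ.erase v, Tq μ v v x' x' := by
    rw [add_comm, Finset.sum_erase_add Finset.univ _ (Finset.mem_univ v)]
  have hconst : ∀ x' ∈ Finset.univ.erase v, Tq μ v v x' x' = Tq μ v v x x := by
    intro x' hx'
    exact (Tq_swap_fix μ v x x' hvx (Ne.symm (Finset.mem_erase.mp hx').1)).symm
  rw [hsplit, Finset.sum_congr rfl hconst, Finset.sum_const, Finset.card_erase_of_mem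
    (Finset.mem_univ v), Finset.card_univ, Tvvvv_eq μ v x hvx] at hsum
  -- hsum : 2 * T + (card - 1) • T = 1 / d
  have hcard : 1 ≤ Fintype.card (Kt N) := Fintype.card_pos
  have hc : d ≠ 0 := Nat.cast_ne_zero.mpr Fintype.card_ne_zero
  have hc1 : d + 1 ≠ 0 := by
    rw [hd]
    exact Nat.cast_add_one_ne_zero _
  rw [nsmul_eq_mul] at hsum
  push_cast [Nat.cast_sub hcard] at hsum
  rw [eq_div_iff (mul_ne_zero hc hc1)]
  rw [eq_div_iff hc] at hsum
  linear_combination hsum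

lemma Tvvvv_val (v : Kt N) (hN : 1 ≤ N) :
    Tq μ v v v v
      = 2 / ((Fintype.card (Kt N) : ℂ) * ((Fintype.card (Kt N) : ℂ) + 1)) := by
  have hnt : ∃ x : Kt N, x ≠ v := by
    refine ⟨fun n => if v n = 0 then 1 else 0, fun h => ?_⟩
    have h0 := congrFun h ⟨0, hN⟩
    by_cases h1 : v ⟨0, hN⟩ = 0 <;> simp [h1] at h0 <;> exact absurd h0.symm (by simp [h1])
  obtain ⟨x, hx⟩ := hnt
  rw [Tvvvv_eq μ v x (Ne.symm hx), Tvvxx_val μ v x (Ne.symm hx)]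
  ring

end HaarPauliAux

namespace HaarPauliAux
open ComplexConjugate
variable {N : ℕ}
set_option maxRecDepth 8000
set_option linter.unusedSectionVars false

variable (μ : Measure (Matrix.unitaryGroup (Kt N) ℂ)) [μ.IsHaarMeasure] [IsProbabilityMeasure μ]

lemma Iq_formula (v w : Kt N) :
    Iq μ v w = (if v = w then 1 else 0) / (Fintype.card (Kt N) : ℂ) := by
  by_cases h : v = w
  · rw [h, if_pos rfl, Iq_diag μ w]
  · rw [if_neg h, Iq_off μ v w h, zero_div]

lemma Tq_formula (hN : 1 ≤ N) (v w x y : Kt N) :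
    Tq μ v w x y
      = ((if v = w then 1 else 0) * (if x = y then 1 else 0)
          + (if v = y then 1 else 0) * (if x = w then 1 else 0))
        / ((Fintype.card (Kt N) : ℂ) * ((Fintype.card (Kt N) : ℂ) + 1)) := by
  by_cases hvw : v = w
  · by_cases hxy : x = y
    · by_cases hvx : v = x
      · -- all equal
        have hvy : v = y := hvx.trans hxy
        have hxw : x = w := hvx.symm.trans hvw
        rw [if_pos hvw, if_pos hxy, if_pos hvy, if_pos hxw, ← hvw, ← hxy, ← hvx]
        rw [Tvvvv_val μ v hN]
        norm_num
      · have hvy : ¬ v = y := fun h => hvx (h.trans hxy.symm)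
        have hxw : ¬ x = w := fun h => hvx (hvw.trans h.symm)
        rw [if_pos hvw, if_pos hxy, if_neg hvy, ← hvw, ← hxy]
        rw [Tvvxx_val μ v x hvx]
        norm_num
    · -- v = w, x ≠ y : zero
      have hrhs : ¬ (v = y ∧ x = w) := by
        rintro ⟨h1, h2⟩
        exact hxy (h2.trans (hvw.symm.trans h1))
      have hz : Tq μ v w x y = 0 := by
        apply Tq_zero_of μ x
        have h1 : ∀ p : Kt N, phD (N := N) x p * conj (phD x p) = 1 := by
          intro p
          by_cases hp : p = x <;> simp [phD, hp, Complex.conj_I]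
        have h2 : phD (N := N) x v * phD x x * conj (phD x w) * conj (phD x y)
            = phD x x * conj (phD x y) := by
          rw [← hvw]
          calc phD (N := N) x v * phD x x * conj (phD x v) * conj (phD x y)
              = (phD x v * conj (phD x v)) * (phD x x * conj (phD x y)) := by ring
            _ = phD x x * conj (phD x y) := by rw [h1 v, one_mul]
        rw [h2]
        have hyx : ¬ y = x := fun h => hxy h.symm
        simp [phD, hyx, Complex.conj_I]
        exact I_ne_one
      rw [hz, if_neg hxy]
      rcases not_and_or.mp hrhs with h | h
      · rw [if_neg h]
        simp
      · rw [if_neg h]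
        simp
  · by_cases hvy : v = y
    · by_cases hxw : x = w
      · -- crossed case
        have hvx : v ≠ x := fun h => hvw (h.trans hxw)
        have hxy : ¬ x = y := fun h => hvw ((hvy.trans h.symm).trans hxw)
        rw [if_neg hvw, if_pos hvy, if_pos hxw, if_neg hxy, ← hvy, ← hxw]
        rw [Tq_comm_conj μ v x x v, Tvvxx_val μ v x hvx]
        norm_num
      · -- v ≠ w, v = y, x ≠ w : zero
        have hz : Tq μ v w x y = 0 := by
          apply Tq_zero_of μ w
          have hvw' : ¬ v = w := hvw
          have hxw' : ¬ x = w := hxw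
          have hyw : ¬ y = w := fun h => hvw (hvy.trans h)
          simp [phD, hvw', hxw', hyw, Complex.conj_I]
          exact neg_I_ne_one
        rw [hz, if_neg hvw, if_neg hxw]
        simp
    · -- v ≠ w, v ≠ y : zero
      have hz : Tq μ v w x y = 0 := by
        apply Tq_zero_of μ v
        have hwv : ¬ w = v := fun h => hvw h.symm
        have hyv : ¬ y = v := fun h => hvy h.symm
        by_cases hxv : x = v
        · simp [phD, hwv, hyv, hxv, Complex.conj_I, Complex.I_mul_I]
          norm_num [Complex.ext_iff]
        · simp [phD, hwv, hyv, hxv, Complex.conj_I]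
          exact I_ne_one
      rw [hz, if_neg hvw, if_neg hvy]
      simp

end HaarPauliAux

namespace HaarPauliAux
variable {N : ℕ}
set_option maxRecDepth 8000
set_option linter.unusedSectionVars false

lemma pauli_trace (k : Fin 4) : (pauli k).trace = if k = 0 then 2 else 0 := by
  fin_cases k <;>
    simp [pauli, Matrix.trace_fin_two, Fin.isValue] <;>
    norm_num

lemma pauli_mul_trace (k l : Fin 4) :
    (pauli k * pauli l).trace = if k = l then 2 else 0 := by
  fin_cases k <;> fin_cases l <;>
    simp [pauli, Matrix.trace_fin_two, Matrix.mul_apply, Fin.sum_univ_two,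
      Complex.I_mul_I, Fin.isValue] <;>
    norm_num [Complex.ext_iff]

lemma pauliString_trace (i : Fin N → Fin 4) :
    (pauliString N i).trace = ∏ n, (pauli (i n)).trace := by
  have h1 : (pauliString N i).trace
      = ∑ v : Kt N, ∏ n, pauli (i n) (v n) (v n) := by
    simp [Matrix.trace, Matrix.diag, pauliString]
  rw [h1]
  have h2 : ∀ n : Fin N, (pauli (i n)).trace = ∑ b : Fin 2, pauli (i n) b b := by
    intro n; simp [Matrix.trace, Matrix.diag]
  rw [Finset.prod_congr rfl (fun n _ => h2 n), Finset.prod_univ_sum]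
  rw [Fintype.piFinset_univ]

lemma pauliString_trace_zero (i : Fin N → Fin 4) (hi : i ≠ fun _ => 0) :
    (pauliString N i).trace = 0 := by
  obtain ⟨n0, hn0⟩ := Function.ne_iff.mp hi
  rw [pauliString_trace]
  exact Finset.prod_eq_zero (Finset.mem_univ n0) (by rw [pauli_trace, if_neg hn0])

lemma pauliString_mul_trace (i j : Fin N → Fin 4) :
    (pauliString N i * pauliString N j).trace
      = ∏ n, (pauli (i n) * pauli (j n)).trace := by
  have h1 : (pauliString N i * pauliString N j).trace
      = ∑ v : Kt N, ∑ w : Kt N, ∏ n, (pauli (i n) (v n) (w n) * pauli (j n) (w n) (v n)) := by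
    simp [Matrix.trace, Matrix.diag, Matrix.mul_apply, pauliString, Finset.prod_mul_distrib]
  rw [h1]
  have h2 : ∀ v : Kt N, ∑ w : Kt N, ∏ n, (pauli (i n) (v n) (w n) * pauli (j n) (w n) (v n))
      = ∏ n, (pauli (i n) * pauli (j n)) (v n) (v n) := by
    intro v
    have h3 : ∀ n : Fin N, (pauli (i n) * pauli (j n)) (v n) (v n)
        = ∑ b : Fin 2, pauli (i n) (v n) b * pauli (j n) b (v n) := by
      intro n; rw [Matrix.mul_apply]
    rw [Finset.prod_congr rfl (fun n _ => h3 n), Finset.prod_univ_sum, Fintype.piFinset_univ]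
  rw [Finset.sum_congr rfl (fun v _ => h2 v)]
  have h4 : ∀ n : Fin N, (pauli (i n) * pauli (j n)).trace
      = ∑ b : Fin 2, (pauli (i n) * pauli (j n)) b b := by
    intro n; simp [Matrix.trace, Matrix.diag]
  rw [Finset.prod_congr rfl (fun n _ => h4 n), Finset.prod_univ_sum, Fintype.piFinset_univ]

lemma pauliString_mul_trace_val (i j : Fin N → Fin 4) :
    (pauliString N i * pauliString N j).trace
      = if i = j then ((2:ℂ) ^ N) else 0 := by
  rw [pauliString_mul_trace]
  by_cases h : i = j
  · rw [if_pos h, h]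
    rw [Finset.prod_congr rfl (fun n _ => by rw [pauli_mul_trace, if_pos rfl])]
    simp
  · rw [if_neg h]
    obtain ⟨n0, hn0⟩ := Function.ne_iff.mp h
    exact Finset.prod_eq_zero (Finset.mem_univ n0) (by rw [pauli_mul_trace, if_neg hn0])

end HaarPauliAux

namespace HaarPauliAux
open ComplexConjugate
variable {N : ℕ}
set_option maxRecDepth 8000
set_option linter.unusedSectionVars false

variable (μ : Measure (Matrix.unitaryGroup (Kt N) ℂ)) [μ.IsHaarMeasure] [IsProbabilityMeasure μ]

lemma rho_apply (U : Matrix.unitaryGroup (Kt N) ℂ) (p q : Kt N) :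
    haarPureState N U p q = ent p U * conj (ent q U) := by
  have he : ∀ r : Kt N, qubitE1 N r = if r = e0 N then 1 else 0 := fun r => rfl
  simp only [haarPureState, Matrix.mul_apply, Matrix.vecMulVec_apply, Pi.star_apply,
    Matrix.conjTranspose_apply, he, apply_ite (star : ℂ → ℂ), star_one, star_zero]
  simp only [mul_ite, ite_mul, mul_zero, zero_mul, mul_one, one_mul,
    Finset.sum_ite_eq', Finset.mem_univ, if_true]
  have hfix : ∀ x : Kt N, (∑ x1 : Kt N, if x = e0 N then
      (if x1 = e0 N then (U : Matrix (Kt N) (Kt N) ℂ) p x1 else 0) else 0)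
      = (if x = e0 N then (U : Matrix (Kt N) (Kt N) ℂ) p (e0 N) else 0) := by
    intro x
    by_cases h : x = e0 N <;> simp [h]
  simp only [hfix, ite_mul, zero_mul, Finset.sum_ite_eq', Finset.mem_univ, if_true]
  rfl

lemma trace_formula (U : Matrix.unitaryGroup (Kt N) ℂ) (A : Matrix (Kt N) (Kt N) ℂ) :
    (haarPureState N U * A).trace
      = ∑ v : Kt N, ∑ w : Kt N, ent v U * conj (ent w U) * A w v := by
  simp [Matrix.trace, Matrix.diag, Matrix.mul_apply, rho_apply]

lemma first_moment (i : Fin N → Fin 4) (hi : i ≠ fun _ => 0) :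
    ∫ U, (haarPureState N U * pauliString N i).trace ∂μ = 0 := by
  have int_vw : ∀ v w : Kt N, Integrable
      (fun U => ent v U * conj (ent w U) * pauliString N i w v) μ :=
    fun v w => (integrable2 μ v w).mul_const _
  simp_rw [trace_formula]
  rw [MeasureTheory.integral_finset_sum _
    (fun v _ => MeasureTheory.integrable_finset_sum _ (fun w _ => int_vw v w))]
  have h2 : ∀ v : Kt N, (∫ U, ∑ w : Kt N,
        ent v U * conj (ent w U) * pauliString N i w v ∂μ)
      = ∑ w : Kt N, Iq μ v w * pauliString N i w v := by
    intro v
    rw [MeasureTheory.integral_finset_sum _ (fun w _ => int_vw v w)]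
    exact Finset.sum_congr rfl fun w _ => by
      rw [MeasureTheory.integral_mul_const]; rfl
  rw [Finset.sum_congr rfl (fun v _ => h2 v)]
  have h3 : ∀ v : Kt N, ∑ w : Kt N, Iq μ v w * pauliString N i w v
      = pauliString N i v v / (Fintype.card (Kt N) : ℂ) := by
    intro v
    rw [Finset.sum_eq_single v]
    · rw [Iq_formula, if_pos rfl]; ring
    · intro w _ hw
      rw [Iq_off μ v w (Ne.symm hw), zero_mul]
    · simp
  rw [Finset.sum_congr rfl (fun v _ => h3 v), ← Finset.sum_div]
  have h4 : ∑ v : Kt N, pauliString N i v v = (pauliString N i).trace := by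
    simp [Matrix.trace, Matrix.diag]
  rw [h4, pauliString_trace_zero i hi, zero_div]

end HaarPauliAux

namespace HaarPauliAux
open ComplexConjugate
variable {N : ℕ}
set_option maxRecDepth 8000
set_option linter.unusedSectionVars false
set_option linter.unusedTactic false
set_option linter.unreachableTactic false

variable (μ : Measure (Matrix.unitaryGroup (Kt N) ℂ)) [μ.IsHaarMeasure] [IsProbabilityMeasure μ]

lemma second_moment (hN : 1 ≤ N) (i j : Fin N → Fin 4)
    (hi : i ≠ fun _ => 0) (hj : j ≠ fun _ => 0) :
    (∫ U, (haarPureState N U * pauliString N i).trace *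
        (haarPureState N U * pauliString N j).trace ∂μ)
      = (if i = j then 1 else 0) / ((2 : ℂ) ^ N + 1) := by
  set Ai := pauliString N i with hAi
  set Aj := pauliString N j with hAj
  set d : ℂ := (Fintype.card (Kt N) : ℂ) with hd
  have hd2 : d = (2:ℂ)^N := by
    rw [hd, Fintype.card_fun]
    push_cast
    norm_num
  set D : ℂ := d * (d + 1) with hD
  -- pointwise expansion
  have key2 : ∀ U : Matrix.unitaryGroup (Kt N) ℂ,
      (haarPureState N U * Ai).trace * (haarPureState N U * Aj).trace
        = ∑ v : Kt N, ∑ x : Kt N, ∑ w : Kt N, ∑ y : Kt N,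
            (ent v U * conj (ent w U) * (ent x U * conj (ent y U))) * (Ai w v * Aj y x) := by
    intro U
    rw [trace_formula, trace_formula, Finset.sum_mul_sum]
    refine Finset.sum_congr rfl fun v _ => Finset.sum_congr rfl fun x _ => ?_
    rw [Finset.sum_mul_sum]
    exact Finset.sum_congr rfl fun w _ => Finset.sum_congr rfl fun y _ => by ring
  simp_rw [key2]
  rw [MeasureTheory.integral_finset_sum _ (fun v _ =>
    MeasureTheory.integrable_finset_sum _ (fun x _ =>
      MeasureTheory.integrable_finset_sum _ (fun w _ =>
        MeasureTheory.integrable_finset_sum _ (fun y _ =>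
          (integrable4 μ v w x y).mul_const _))))]
  have h2 : ∀ v : Kt N, (∫ U, ∑ x : Kt N, ∑ w : Kt N, ∑ y : Kt N,
        (ent v U * conj (ent w U) * (ent x U * conj (ent y U))) * (Ai w v * Aj y x) ∂μ)
      = ∑ x : Kt N, ∑ w : Kt N, ∑ y : Kt N, Tq μ v w x y * (Ai w v * Aj y x) := by
    intro v
    rw [MeasureTheory.integral_finset_sum _ (fun x _ =>
      MeasureTheory.integrable_finset_sum _ (fun w _ =>
        MeasureTheory.integrable_finset_sum _ (fun y _ =>
          (integrable4 μ v w x y).mul_const _)))]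
    refine Finset.sum_congr rfl fun x _ => ?_
    rw [MeasureTheory.integral_finset_sum _ (fun w _ =>
      MeasureTheory.integrable_finset_sum _ (fun y _ =>
        (integrable4 μ v w x y).mul_const _))]
    refine Finset.sum_congr rfl fun w _ => ?_
    rw [MeasureTheory.integral_finset_sum _ (fun y _ => (integrable4 μ v w x y).mul_const _)]
    refine Finset.sum_congr rfl fun y _ => ?_
    rw [MeasureTheory.integral_mul_const]
    rfl
  rw [Finset.sum_congr rfl (fun v _ => h2 v)]
  -- plug in the Tq formula and collapse the sums
  have hTq : ∀ v w x y : Kt N, Tq μ v w x y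
      = ((if v = w then (1:ℂ) else 0) * (if x = y then 1 else 0)
          + (if v = y then 1 else 0) * (if x = w then 1 else 0)) / D := by
    intro v w x y
    rw [Tq_formula μ hN v w x y]
  have hy : ∀ v x w : Kt N, ∑ y : Kt N, Tq μ v w x y * (Ai w v * Aj y x)
      = (if v = w then (1:ℂ) else 0) / D * (Ai w v * Aj x x)
        + (if x = w then (1:ℂ) else 0) / D * (Ai w v * Aj v x) := by
    intro v x w
    have hterm : ∀ y : Kt N, Tq μ v w x y * (Ai w v * Aj y x)
        = (if x = y then ((if v = w then (1:ℂ) else 0) / D * (Ai w v * Aj y x)) else 0)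
          + (if v = y then ((if x = w then (1:ℂ) else 0) / D * (Ai w v * Aj y x)) else 0) := by
      intro y
      rw [hTq]
      by_cases h1 : x = y <;> by_cases h2 : v = y <;> simp [h1, h2] <;> ring
    rw [Finset.sum_congr rfl fun y _ => hterm y, Finset.sum_add_distrib,
      Finset.sum_ite_eq Finset.univ x _, Finset.sum_ite_eq Finset.univ v _]
    simp
  simp_rw [hy]
  have hw : ∀ v x : Kt N,
      ∑ w : Kt N, ((if v = w then (1:ℂ) else 0) / D * (Ai w v * Aj x x)
        + (if x = w then (1:ℂ) else 0) / D * (Ai w v * Aj v x))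
      = (1:ℂ) / D * (Ai v v * Aj x x) + (1:ℂ) / D * (Ai x v * Aj v x) := by
    intro v x
    rw [Finset.sum_add_distrib]
    congr 1
    · have hterm : ∀ w : Kt N, (if v = w then (1:ℂ) else 0) / D * (Ai w v * Aj x x)
          = if v = w then ((1:ℂ) / D * (Ai w v * Aj x x)) else 0 := by
        intro w
        by_cases h : v = w <;> simp [h]
      rw [Finset.sum_congr rfl fun w _ => hterm w, Finset.sum_ite_eq Finset.univ v _]
      simp
    · have hterm : ∀ w : Kt N, (if x = w then (1:ℂ) else 0) / D * (Ai w v * Aj v x)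
          = if x = w then ((1:ℂ) / D * (Ai w v * Aj v x)) else 0 := by
        intro w
        by_cases h : x = w <;> simp [h]
      rw [Finset.sum_congr rfl fun w _ => hterm w, Finset.sum_ite_eq Finset.univ x _]
      simp
  simp_rw [hw]
  simp_rw [Finset.sum_add_distrib]
  -- first part vanishes using trace Ai = 0
  have e1 : ∑ v : Kt N, ∑ x : Kt N, (1:ℂ) / D * (Ai v v * Aj x x) = 0 := by
    have : ∀ v : Kt N, ∑ x : Kt N, (1:ℂ) / D * (Ai v v * Aj x x)
        = (1:ℂ) / D * Ai v v * (pauliString N j).trace := by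
      intro v
      rw [show (pauliString N j).trace = ∑ x : Kt N, Aj x x by simp [hAj, Matrix.trace, Matrix.diag]]
      rw [Finset.mul_sum]
      refine Finset.sum_congr rfl fun x _ => by ring
    rw [Finset.sum_congr rfl fun v _ => this v]
    rw [pauliString_trace_zero j hj]
    simp
  -- second part gives the trace of the product
  have e2 : ∑ v : Kt N, ∑ x : Kt N, (1:ℂ) / D * (Ai x v * Aj v x)
      = (1:ℂ) / D * (pauliString N j * pauliString N i).trace := by
    have htr : (pauliString N j * pauliString N i).trace
        = ∑ v : Kt N, ∑ x : Kt N, Ai x v * Aj v x := by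
      simp only [Matrix.trace, Matrix.diag, Matrix.mul_apply, ← hAi, ← hAj]
      exact Finset.sum_congr rfl fun v _ => Finset.sum_congr rfl fun x _ => by ring
    rw [htr, Finset.mul_sum]
    refine Finset.sum_congr rfl fun v _ => ?_
    rw [Finset.mul_sum]
  rw [e1, e2, pauliString_mul_trace_val j i, zero_add]
  -- final arithmetic
  have h2N : ((2:ℂ)^N) ≠ 0 := pow_ne_zero _ two_ne_zero
  have h2N1 : ((2:ℂ)^N + 1) ≠ 0 := by
    rw [← hd2, hd]
    exact Nat.cast_add_one_ne_zero _
  by_cases hij : i = j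
  · rw [if_pos hij, if_pos hij.symm, hD, hd2]
    field_simp
    try ring
  · rw [if_neg hij, if_neg (fun h => hij h.symm)]
    simp

end HaarPauliAux

/-- **Moments of Pauli coefficients of a Haar-random pure state.**
Let `N ≥ 1`, `μ` be the Haar probability measure on `U(2^N)`, and `ρ := U e₁e₁†U†`.
Then for all nonzero multi-indices `i, j ∈ {0,1,2,3}^N`:
`E[Tr[ρσ_i]] = 0` and `E[Tr[ρσ_i]·Tr[ρσ_j]] = δ_{ij}/(2^N + 1)`. -/
theorem haar_pure_state_pauli_coeff_moments (N : ℕ) (hN : 1 ≤ N)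
    (μ : Measure (Matrix.unitaryGroup (Fin N → Fin 2) ℂ))
    [μ.IsHaarMeasure] [IsProbabilityMeasure μ]
    (i j : Fin N → Fin 4) (hi : i ≠ fun _ => 0) (hj : j ≠ fun _ => 0) :
    (∫ U : Matrix.unitaryGroup (Fin N → Fin 2) ℂ,
        (haarPureState N U * pauliString N i).trace ∂μ) = 0
    ∧ (∫ U : Matrix.unitaryGroup (Fin N → Fin 2) ℂ,
        (haarPureState N U * pauliString N i).trace *
          (haarPureState N U * pauliString N j).trace ∂μ)
      = (if i = j then 1 else 0) / ((2 : ℂ) ^ N + 1) := by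
  exact ⟨HaarPauliAux.first_moment μ i hi, HaarPauliAux.second_moment μ hN i j hi hj⟩
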